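/- P_{S,R}·P_add = P_add; in other words, the oblique projection P_{S,R} acts as the identity on the additive subspace (the range of ZᵀZ). -/
import Mathlib


open Matrix

/-- `P_{S,R}·P_add = P_add`; the oblique projection `P_{S,R}` acts
as the identity on the additive subspace (the range of `ZᵀZ`). -/
theorem oblique_projection_fixes_additive
    {N q : ℕ} (hN : 0 < N) (hq : 0 < q)
    (S : Matrix (Fin N) (Fin N) ℝ) (hS : S.PosSemidef)
    (R : ℝ) (hR : 0 < R)
    (Z : Matrix (Fin q) (Fin N) ℝ)
    (hZ1 : (Zᵀ * Z) * (Zᵀ * Z) = Zᵀ * Z)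
    (hZ2 : (Z * Zᵀ) * (Z * Zᵀ) = Z * Zᵀ)
    (hSR : (S + R • (1 : Matrix (Fin N) (Fin N) ℝ)).PosDef)
    (A : Matrix (Fin N) (Fin N) ℝ)
    (hA : A = R • (S + R • (1 : Matrix (Fin N) (Fin N) ℝ))⁻¹)
    (Λ : Matrix (Fin q) (Fin q) ℝ)
    (hΛ : Λ = (1 : Matrix (Fin q) (Fin q) ℝ) - Z * A * Zᵀ)
    (hΛunit : IsUnit Λ)
    (P : Matrix (Fin N) (Fin N) ℝ)
    (hP : P = Zᵀ * Λ⁻¹ * Z * ((1 : Matrix (Fin N) (Fin N) ℝ) - A)) :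
    P * (Zᵀ * Z) = Zᵀ * Z := by
  have e2 : Z * (Zᵀ * (Z * Zᵀ)) = Z * Zᵀ := by
    simpa [Matrix.mul_assoc] using hZ2
  -- First: Z * Zᵀ * Z = Z, from idempotency of Z * Zᵀ.
  have hZZZ : Z * Zᵀ * Z = Z := by
    have hX : (Z * Zᵀ * Z - Z) * (Z * Zᵀ * Z - Z)ᴴ = 0 := by
      have hct : (Z * Zᵀ * Z - Z)ᴴ = Zᵀ * Z * Zᵀ - Zᵀ := by
        ext i j
        simp [conjTranspose_apply, Matrix.sub_apply, Matrix.mul_apply,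
          Matrix.transpose_apply, Finset.mul_sum, Finset.sum_mul, mul_comm,
          mul_left_comm]
        rw [Finset.sum_comm]
      rw [hct]
      simp only [Matrix.sub_mul, Matrix.mul_sub, Matrix.mul_assoc]
      simp only [e2]
      abel
    exact sub_eq_zero.mp (Matrix.self_mul_conjTranspose_eq_zero.mp hX)
  have hZZZ' : Z * (Zᵀ * Z) = Z := by simpa [Matrix.mul_assoc] using hZZZ
  -- Key: Z * (1 - A) * (Zᵀ * Z) = Λ * Z
  have hkey : Z * ((1 : Matrix (Fin N) (Fin N) ℝ) - A) * (Zᵀ * Z) = Λ * Z := by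
    rw [hΛ]
    simp only [Matrix.mul_sub, Matrix.sub_mul, Matrix.mul_one, Matrix.one_mul,
      Matrix.mul_assoc, hZZZ']
  have hinv : Λ⁻¹ * Λ = 1 :=
    Matrix.nonsing_inv_mul Λ ((Matrix.isUnit_iff_isUnit_det Λ).mp hΛunit)
  calc P * (Zᵀ * Z)
      = Zᵀ * Λ⁻¹ * (Z * ((1 : Matrix (Fin N) (Fin N) ℝ) - A) * (Zᵀ * Z)) := by
        rw [hP]; simp only [Matrix.mul_assoc]
    _ = Zᵀ * (Λ⁻¹ * Λ) * Z := by rw [hkey]; simp only [Matrix.mul_assoc]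
    _ = Zᵀ * Z := by rw [hinv, Matrix.mul_one]
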